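/- arXiv:2603.29054 — 4 statements merged into one kernel-verified Lean document; each statement's English description precedes it below -/
import Mathlib

section
/- Let θ* ∈ E, r > 0, and let B be the closed ball of radius r centered at θ*. Let F : E → E be continuously differentiable on B, and suppose there exists μ > 0 such that ⟪v, F'(θ) v⟫ ≤ −μ‖v‖² for every θ ∈ B and every v ∈ E. If ‖F(θ*)‖ < μ r / 2, then F has exactly one zero θ̂ in B, and this zero satisfies ‖θ̂ − θ*‖ ≤ ‖F(θ*)‖ / μ. -/
open scoped RealInnerProductSpace

lemma strong_mono_aux {d : ℕ} {B : Set (EuclideanSpace ℝ (Fin d))} (hBc : Convex ℝ B)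
    {F : EuclideanSpace ℝ (Fin d) → EuclideanSpace ℝ (Fin d)}
    {F' : EuclideanSpace ℝ (Fin d) → EuclideanSpace ℝ (Fin d) →L[ℝ] EuclideanSpace ℝ (Fin d)}
    (hderiv : ∀ θ ∈ B, HasFDerivWithinAt F (F' θ) B θ) {μ : ℝ}
    (hneg : ∀ θ ∈ B, ∀ v : EuclideanSpace ℝ (Fin d), ⟪v, F' θ v⟫ ≤ -μ * ‖v‖ ^ 2) :
    ∀ a ∈ B, ∀ b ∈ B, ⟪a - b, F a - F b⟫ ≤ -μ * ‖a - b‖ ^ 2 := by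
  intro a ha b hb
  set v := a - b with hv
  set γ : ℝ → EuclideanSpace ℝ (Fin d) := fun t => b + t • v with hγ
  have hγmem : Set.MapsTo γ (Set.Icc (0:ℝ) 1) B := by
    intro t ht
    have h := hBc hb ha (by linarith [ht.2] : (0:ℝ) ≤ 1 - t) ht.1 (by ring)
    have : γ t = (1 - t) • b + t • a := by
      simp only [hγ, hv, smul_sub, sub_smul, one_smul]; abel
    rw [this]; exact h
  have hγd : ∀ t : ℝ, HasDerivAt γ v t := by
    intro t
    have h := ((hasDerivAt_id t).smul_const v).const_add b; rw [one_smul] at h; exact h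
  set g : ℝ → ℝ := fun t => ⟪v, F (γ t)⟫ with hgdef
  have hg : ∀ t ∈ Set.Icc (0:ℝ) 1,
      HasDerivWithinAt g ⟪v, F' (γ t) v⟫ (Set.Icc (0:ℝ) 1) t := by
    intro t ht
    have h1 : HasDerivWithinAt (fun u => F (γ u)) (F' (γ t) v) (Set.Icc (0:ℝ) 1) t :=
      (hderiv _ (hγmem ht)).comp_hasDerivWithinAt t ((hγd t).hasDerivWithinAt) hγmem
    have h2 := ((innerSL ℝ v).hasFDerivAt.comp_hasDerivWithinAt t h1)
    exact h2
  set h : ℝ → ℝ := fun t => -μ * ‖v‖ ^ 2 * t - g t with hhdef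
  have hh : ∀ t ∈ Set.Icc (0:ℝ) 1,
      HasDerivWithinAt h (-μ * ‖v‖ ^ 2 - ⟪v, F' (γ t) v⟫) (Set.Icc (0:ℝ) 1) t := by
    intro t ht
    have h1 : HasDerivAt (fun u : ℝ => -μ * ‖v‖ ^ 2 * u) (-μ * ‖v‖ ^ 2) t := by
      have h := (hasDerivAt_id t).const_mul (-μ * ‖v‖ ^ 2); rw [mul_one] at h; exact h
    exact h1.hasDerivWithinAt.sub (hg t ht)
  have hmono : MonotoneOn h (Set.Icc (0:ℝ) 1) := by
    apply monotoneOn_of_hasDerivWithinAt_nonneg (convex_Icc 0 1)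
      (fun t ht => (hh t ht).continuousWithinAt)
      (f' := fun t => -μ * ‖v‖ ^ 2 - ⟪v, F' (γ t) v⟫)
    · intro x hx
      exact ((hh x (interior_subset hx)).mono interior_subset)
    · intro x hx
      have := hneg (γ x) (hγmem (interior_subset hx))  v
      linarith
  have h01 := hmono (Set.left_mem_Icc.2 zero_le_one) (Set.right_mem_Icc.2 zero_le_one) zero_le_one
  have hγ0 : γ 0 = b := by simp [hγ]
  have hγ1 : γ 1 = a := by simp [hγ, hv]
  simp only [hhdef, hgdef, hγ0, hγ1, mul_zero, mul_one, zero_sub] at h01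
  rw [inner_sub_right]
  linarith

set_option maxHeartbeats 1000000 in
/-- If `F : E → E` is continuously differentiable on the closed ball `B` of
radius `r` around `θ*`, its derivative is uniformly negative definite there
(`⟪v, F'(θ) v⟫ ≤ -μ‖v‖²`), and `‖F(θ*)‖ < μ r / 2`, then `F` has exactly one zero `θ̂` in `B`,
and this zero satisfies `‖θ̂ - θ*‖ ≤ ‖F(θ*)‖ / μ`. -/
theorem stmt_0 {d : ℕ} (θstar : EuclideanSpace ℝ (Fin d)) (r : ℝ) (hr : 0 < r)
    (B : Set (EuclideanSpace ℝ (Fin d))) (hB : B = Metric.closedBall θstar r)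
    (F : EuclideanSpace ℝ (Fin d) → EuclideanSpace ℝ (Fin d))
    (F' : EuclideanSpace ℝ (Fin d) → EuclideanSpace ℝ (Fin d) →L[ℝ] EuclideanSpace ℝ (Fin d))
    (hderiv : ∀ θ ∈ B, HasFDerivWithinAt F (F' θ) B θ)
    (hcont : ContinuousOn F' B)
    (μ : ℝ) (hμ : 0 < μ)
    (hneg : ∀ θ ∈ B, ∀ v : EuclideanSpace ℝ (Fin d), ⟪v, F' θ v⟫ ≤ -μ * ‖v‖ ^ 2)
    (hsmall : ‖F θstar‖ < μ * r / 2) :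
    ∃ θhat : EuclideanSpace ℝ (Fin d),
      (θhat ∈ B ∧ F θhat = 0 ∧ ‖θhat - θstar‖ ≤ ‖F θstar‖ / μ) ∧
      ∀ θ' ∈ B, F θ' = 0 → θ' = θhat := by
  have hBconv : Convex ℝ B := hB ▸ convex_closedBall θstar r
  have hθB : θstar ∈ B := by rw [hB]; exact Metric.mem_closedBall_self hr.le
  have hBclosed : IsClosed B := hB ▸ Metric.isClosed_closedBall
  have hBcompact : IsCompact B := hB ▸ isCompact_closedBall θstar r
  have hmono := strong_mono_aux hBconv hderiv hneg
  -- bound on the derivative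
  obtain ⟨θ₀, hθ₀B, hθ₀⟩ := hBcompact.exists_isMaxOn ⟨θstar, hθB⟩ hcont.norm
  set L : ℝ := max ‖F' θ₀‖ μ with hLdef
  have hL : ∀ θ ∈ B, ‖F' θ‖ ≤ L := fun θ hθ => (hθ₀ hθ).trans (le_max_left _ _)
  have hμL : μ ≤ L := le_max_right _ _
  have hL0 : 0 < L := lt_of_lt_of_le hμ hμL
  have hlip : ∀ a ∈ B, ∀ b ∈ B, ‖F a - F b‖ ≤ L * ‖a - b‖ := fun a ha b hb =>
    hBconv.norm_image_sub_le_of_norm_hasFDerivWithin_le hderiv hL hb ha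
  set c : ℝ := μ / L ^ 2 with hcdef
  have hc : 0 < c := div_pos hμ (by positivity)
  have hcμ1 : c * μ ≤ 1 := by
    rw [hcdef, div_mul_eq_mul_div, div_le_one (by positivity)]
    nlinarith
  have hcμ0 : 0 < c * μ := mul_pos hc hμ
  set q : ℝ := 1 - c * μ with hqdef
  have hq0 : 0 ≤ q := by linarith
  set T : EuclideanSpace ℝ (Fin d) → EuclideanSpace ℝ (Fin d) := fun x => x + c • F x with hT
  have hc2L2 : c ^ 2 * L ^ 2 = c * μ := by
    rw [hcdef]; field_simp
  have hcontr : ∀ a ∈ B, ∀ b ∈ B, ‖T a - T b‖ ≤ Real.sqrt q * ‖a - b‖ := by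
    intro a ha b hb
    have hTsub : T a - T b = (a - b) + c • (F a - F b) := by
      simp only [hT, smul_sub]; abel
    have hexp := norm_add_sq_real (a - b) (c • (F a - F b))
    have hin : ⟪a - b, c • (F a - F b)⟫ = c * ⟪a - b, F a - F b⟫ := real_inner_smul_right _ _ _
    have h1 : ⟪a - b, F a - F b⟫ ≤ -μ * ‖a - b‖ ^ 2 := hmono a ha b hb
    have h2 : ‖F a - F b‖ ≤ L * ‖a - b‖ := hlip a ha b hb
    have h3 : ‖c • (F a - F b)‖ ^ 2 ≤ c * μ * ‖a - b‖ ^ 2 := by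
      rw [norm_smul, Real.norm_eq_abs, abs_of_pos hc]
      have h4 : ‖F a - F b‖ ^ 2 ≤ (L * ‖a - b‖) ^ 2 := by
        apply sq_le_sq' _ h2; nlinarith [norm_nonneg (F a - F b)]
      calc (c * ‖F a - F b‖) ^ 2 = c ^ 2 * ‖F a - F b‖ ^ 2 := by ring
        _ ≤ c ^ 2 * (L * ‖a - b‖) ^ 2 := by nlinarith
        _ = c ^ 2 * L ^ 2 * ‖a - b‖ ^ 2 := by ring
        _ = c * μ * ‖a - b‖ ^ 2 := by rw [hc2L2]
    have hsq : ‖T a - T b‖ ^ 2 ≤ q * ‖a - b‖ ^ 2 := by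
      rw [hTsub, hexp, hin, hqdef]; nlinarith
    calc ‖T a - T b‖ = Real.sqrt (‖T a - T b‖ ^ 2) := (Real.sqrt_sq (norm_nonneg _)).symm
      _ ≤ Real.sqrt (q * ‖a - b‖ ^ 2) := Real.sqrt_le_sqrt hsq
      _ = Real.sqrt q * ‖a - b‖ := by
          rw [Real.sqrt_mul hq0, Real.sqrt_sq (norm_nonneg _)]
  have hsqrtq : Real.sqrt q ≤ 1 - c * μ / 2 := by
    have h1 : q ≤ (1 - c * μ / 2) ^ 2 := by nlinarith
    calc Real.sqrt q ≤ Real.sqrt ((1 - c * μ / 2) ^ 2) := Real.sqrt_le_sqrt h1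
      _ = 1 - c * μ / 2 := Real.sqrt_sq (by linarith)
  have hmaps : ∀ θ ∈ B, T θ ∈ B := by
    intro θ hθ
    have hθr : ‖θ - θstar‖ ≤ r := by
      rw [hB, Metric.mem_closedBall, dist_eq_norm] at hθ; exact hθ
    have h1 : ‖T θ - T θstar‖ ≤ Real.sqrt q * ‖θ - θstar‖ := hcontr θ hθ θstar hθB
    have h2 : T θstar - θstar = c • F θstar := by simp [hT]
    have h3 : ‖T θstar - θstar‖ ≤ c * (μ * r / 2) := by
      rw [h2, norm_smul, Real.norm_eq_abs, abs_of_pos hc]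
      exact mul_le_mul_of_nonneg_left hsmall.le hc.le
    rw [hB, Metric.mem_closedBall, dist_eq_norm]
    have h4 : ‖T θ - θstar‖ ≤ ‖T θ - T θstar‖ + ‖T θstar - θstar‖ := by
      have := norm_add_le (T θ - T θstar) (T θstar - θstar)
      simpa using this
    have hsqq : 0 ≤ Real.sqrt q := Real.sqrt_nonneg q
    calc ‖T θ - θstar‖ ≤ Real.sqrt q * ‖θ - θstar‖ + c * (μ * r / 2) := by linarith
      _ ≤ (1 - c * μ / 2) * r + c * (μ * r / 2) := by
          have hmm := mul_le_mul hsqrtq hθr (norm_nonneg _) (by linarith : (0:ℝ) ≤ 1 - c * μ / 2)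
          linarith
      _ = r := by ring
  -- fixed point on the subtype
  haveI : Nonempty B := ⟨⟨θstar, hθB⟩⟩
  haveI : CompleteSpace B := hBclosed.completeSpace_coe
  set T' : B → B := fun x => ⟨T x.1, hmaps x.1 x.2⟩ with hT'
  set k : NNReal := ⟨Real.sqrt q, Real.sqrt_nonneg q⟩ with hk
  have hk1 : k < 1 := by
    rw [← NNReal.coe_lt_coe]
    simp only [hk, NNReal.coe_mk, NNReal.coe_one]
    show Real.sqrt q < 1
    linarith
  have hlipT : LipschitzWith k T' := by
    apply LipschitzWith.of_dist_le_mul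
    intro x y
    rw [Subtype.dist_eq, Subtype.dist_eq, dist_eq_norm, dist_eq_norm]
    exact hcontr x.1 x.2 y.1 y.2
  have hCW : ContractingWith k T' := ⟨hk1, hlipT⟩
  set x₀ : B := hCW.fixedPoint with hx₀
  have hfix : T' x₀ = x₀ := hCW.fixedPoint_isFixedPt
  have hFx₀ : F x₀.1 = 0 := by
    have : (x₀ : EuclideanSpace ℝ (Fin d)) + c • F x₀.1 = x₀ := congrArg Subtype.val hfix
    have h5 : c • F x₀.1 = 0 := by
      have := add_eq_left.mp this
      exact this
    rcases smul_eq_zero.mp h5 with h | h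
    · exact absurd h hc.ne'
    · exact h
  refine ⟨x₀.1, ⟨x₀.2, hFx₀, ?_⟩, ?_⟩
  · -- bound
    have h1 : ⟪x₀.1 - θstar, F x₀.1 - F θstar⟫ ≤ -μ * ‖x₀.1 - θstar‖ ^ 2 :=
      hmono x₀.1 x₀.2 θstar hθB
    rw [hFx₀, zero_sub, inner_neg_right] at h1
    have h2 : ⟪x₀.1 - θstar, F θstar⟫ ≤ ‖x₀.1 - θstar‖ * ‖F θstar‖ := real_inner_le_norm _ _
    have h3 : μ * ‖x₀.1 - θstar‖ ^ 2 ≤ ‖x₀.1 - θstar‖ * ‖F θstar‖ := by linarith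
    rcases eq_or_lt_of_le (norm_nonneg (x₀.1 - θstar)) with h | h
    · rw [← h]; positivity
    · rw [le_div_iff₀ hμ]
      nlinarith
  · -- uniqueness
    intro θ' hθ' hFθ'
    have h1 : ⟪θ' - x₀.1, F θ' - F x₀.1⟫ ≤ -μ * ‖θ' - x₀.1‖ ^ 2 :=
      hmono θ' hθ' x₀.1 x₀.2
    rw [hFθ', hFx₀, sub_zero, inner_zero_right] at h1
    have h2 : ‖θ' - x₀.1‖ ^ 2 ≤ 0 := by nlinarith
    have h3 : θ' - x₀.1 = 0 := by
      have h4 : ‖θ' - x₀.1‖ = 0 := by nlinarith [norm_nonneg (θ' - x₀.1)]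
      exact norm_eq_zero.mp h4
    exact sub_eq_zero.mp h3
end

section
/- Let U, V : Ω → ℝ^d be random vectors on a probability space (Ω, 𝔉, P) with E‖U‖² ≤ C², E‖V‖² ≤ C², and E‖U − V‖² < ∞. Then the spectral norm of the difference of second-moment matrices satisfies ‖E[U Uᵀ] − E[V Vᵀ]‖₂ ≤ 2C √(E‖U − V‖²). -/
open MeasureTheory

/-- The spectral norm (ℓ²→ℓ² operator norm) of a real square matrix. -/
noncomputable def specNorm {d : ℕ} (M : Matrix (Fin d) (Fin d) ℝ) : ℝ :=
  ‖(Matrix.toEuclideanCLM (𝕜 := ℝ) M :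
      EuclideanSpace ℝ (Fin d) →L[ℝ] EuclideanSpace ℝ (Fin d))‖

section AuxCS

variable {Ω : Type*} [MeasurableSpace Ω] {P : Measure Ω}

lemma my_int_mul {f g : Ω → ℝ} (hfm : AEStronglyMeasurable f P) (hgm : AEStronglyMeasurable g P)
    (hf2 : Integrable (fun ω => f ω ^ 2) P) (hg2 : Integrable (fun ω => g ω ^ 2) P) :
    Integrable (fun ω => f ω * g ω) P := by
  refine ((hf2.add hg2).div_const 2).mono' (hfm.mul hgm) (ae_of_all _ fun ω => ?_)
  simp only [Real.norm_eq_abs, abs_mul, Pi.add_apply]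
  nlinarith [sq_nonneg (|f ω| - |g ω|), sq_abs (f ω), sq_abs (g ω), abs_nonneg (f ω), abs_nonneg (g ω)]

lemma my_cs {f g : Ω → ℝ} (hfm : AEStronglyMeasurable f P) (hgm : AEStronglyMeasurable g P)
    (hf2 : Integrable (fun ω => f ω ^ 2) P) (hg2 : Integrable (fun ω => g ω ^ 2) P) :
    |∫ ω, f ω * g ω ∂P| ≤ Real.sqrt (∫ ω, f ω ^ 2 ∂P) * Real.sqrt (∫ ω, g ω ^ 2 ∂P) := by
  have hmul := my_int_mul hfm hgm hf2 hg2
  set A := ∫ ω, f ω ^ 2 ∂P with hAdef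
  set B := ∫ ω, f ω * g ω ∂P with hBdef
  set Cc := ∫ ω, g ω ^ 2 ∂P with hCdef
  have hA : 0 ≤ A := integral_nonneg fun ω => sq_nonneg _
  have hCc : 0 ≤ Cc := integral_nonneg fun ω => sq_nonneg _
  have hquad : ∀ t : ℝ, 0 ≤ A * (t * t) + (2 * B) * t + Cc := by
    intro t
    have h0 : 0 ≤ ∫ ω, (t * f ω + g ω) ^ 2 ∂P := integral_nonneg fun ω => sq_nonneg _
    have hexp : (fun ω => (t * f ω + g ω) ^ 2)
        = fun ω => (t * t) * f ω ^ 2 + (2 * t) * (f ω * g ω) + g ω ^ 2 := by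
      funext ω; ring
    have i1 : Integrable (fun ω => (t * t) * f ω ^ 2) P := hf2.const_mul _
    have i2 : Integrable (fun ω => (2 * t) * (f ω * g ω)) P := hmul.const_mul _
    have i12 : Integrable (fun ω => (t * t) * f ω ^ 2 + (2 * t) * (f ω * g ω)) P := i1.add i2
    rw [hexp, integral_add i12 hg2, integral_add i1 i2,
      integral_const_mul, integral_const_mul] at h0
    nlinarith
  have hd := discrim_le_zero hquad
  rw [discrim] at hd
  have hB2 : B ^ 2 ≤ A * Cc := by nlinarith
  calc |B| = Real.sqrt (B ^ 2) := (Real.sqrt_sq_eq_abs B).symm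
    _ ≤ Real.sqrt (A * Cc) := Real.sqrt_le_sqrt hB2
    _ = Real.sqrt A * Real.sqrt Cc := Real.sqrt_mul hA Cc

open RealInnerProductSpace in
lemma my_inner_sq {d : ℕ} (P : Measure Ω) [IsProbabilityMeasure P]
    (w : Ω → EuclideanSpace ℝ (Fin d)) (hw : Measurable w)
    (hw2 : Integrable (fun ω => ‖w ω‖ ^ 2) P) (y : EuclideanSpace ℝ (Fin d)) :
    Integrable (fun ω => (⟪w ω, y⟫) ^ 2) P ∧
      ∫ ω, (⟪w ω, y⟫) ^ 2 ∂P ≤ (∫ ω, ‖w ω‖ ^ 2 ∂P) * ‖y‖ ^ 2 := by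
  have hm : Measurable fun ω => (⟪w ω, y⟫ : ℝ) := hw.inner_const (c := y)
  have hpw : ∀ ω, (⟪w ω, y⟫ : ℝ) ^ 2 ≤ ‖w ω‖ ^ 2 * ‖y‖ ^ 2 := by
    intro ω
    have h1 : |⟪w ω, y⟫| ≤ ‖w ω‖ * ‖y‖ := abs_real_inner_le_norm _ _
    nlinarith [abs_nonneg (⟪w ω, y⟫ : ℝ), sq_abs (⟪w ω, y⟫ : ℝ)]
  have hint : Integrable (fun ω => (⟪w ω, y⟫ : ℝ) ^ 2) P := by
    refine (hw2.mul_const (‖y‖ ^ 2)).mono' (hm.pow_const 2).aestronglyMeasurable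
      (ae_of_all _ fun ω => ?_)
    rw [Real.norm_eq_abs, abs_of_nonneg (sq_nonneg _)]
    exact hpw ω
  refine ⟨hint, ?_⟩
  calc ∫ ω, (⟪w ω, y⟫ : ℝ) ^ 2 ∂P ≤ ∫ ω, ‖w ω‖ ^ 2 * ‖y‖ ^ 2 ∂P :=
        integral_mono hint (hw2.mul_const _) hpw
    _ = (∫ ω, ‖w ω‖ ^ 2 ∂P) * ‖y‖ ^ 2 := integral_mul_const _ _


end AuxCS

open RealInnerProductSpace

/-- For random vectors `U, V` with `E‖U‖² ≤ C²`, `E‖V‖² ≤ C²` and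
`E‖U - V‖² < ∞`, the second-moment matrices satisfy
`‖E[U Uᵀ] - E[V Vᵀ]‖₂ ≤ 2C √(E‖U - V‖²)`. -/
theorem stmt_7 {d : ℕ} {Ω : Type*} [MeasurableSpace Ω] (P : Measure Ω) [IsProbabilityMeasure P]
    (U V : Ω → EuclideanSpace ℝ (Fin d))
    (hU : Measurable U) (hV : Measurable V)
    (C : ℝ) (hC : 0 ≤ C)
    (hU2 : Integrable (fun ω => ‖U ω‖ ^ 2) P)
    (hUC : ∫ ω, ‖U ω‖ ^ 2 ∂P ≤ C ^ 2)
    (hV2 : Integrable (fun ω => ‖V ω‖ ^ 2) P)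
    (hVC : ∫ ω, ‖V ω‖ ^ 2 ∂P ≤ C ^ 2)
    (hUV2 : Integrable (fun ω => ‖U ω - V ω‖ ^ 2) P) :
    specNorm ((Matrix.of fun i j => ∫ ω, U ω i * U ω j ∂P) -
        (Matrix.of fun i j => ∫ ω, V ω i * V ω j ∂P)) ≤
      2 * C * Real.sqrt (∫ ω, ‖U ω - V ω‖ ^ 2 ∂P) := by
  have hE2 : (0:ℝ) ≤ ∫ ω, ‖U ω - V ω‖ ^ 2 ∂P := integral_nonneg fun ω => sq_nonneg _
  set E2 := ∫ ω, ‖U ω - V ω‖ ^ 2 ∂P with hE2def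
  set Mmat := ((Matrix.of fun i j => ∫ ω, U ω i * U ω j ∂P) -
        (Matrix.of fun i j => ∫ ω, V ω i * V ω j ∂P)) with hMdef
  unfold specNorm
  set T := (Matrix.toEuclideanCLM (𝕜 := ℝ) Mmat :
      EuclideanSpace ℝ (Fin d) →L[ℝ] EuclideanSpace ℝ (Fin d)) with hTdef
  -- coordinate facts
  have coord : ∀ (x : EuclideanSpace ℝ (Fin d)) i, x i ^ 2 ≤ ‖x‖ ^ 2 := by
    intro x i
    rw [EuclideanSpace.norm_eq, Real.sq_sqrt (Finset.sum_nonneg fun j _ => sq_nonneg _)]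
    calc x i ^ 2 = ‖x i‖ ^ 2 := by rw [Real.norm_eq_abs, sq_abs]
      _ ≤ ∑ j, ‖x j‖ ^ 2 := Finset.single_le_sum (f := fun j => ‖x j‖ ^ 2) (fun j _ => sq_nonneg _) (Finset.mem_univ i)
  have hUi : ∀ i, Measurable fun ω => U ω i := fun i =>
    ((EuclideanSpace.proj (𝕜 := ℝ) i).continuous.measurable).comp hU
  have hVi : ∀ i, Measurable fun ω => V ω i := fun i =>
    ((EuclideanSpace.proj (𝕜 := ℝ) i).continuous.measurable).comp hV
  have hUsq : ∀ i, Integrable (fun ω => U ω i ^ 2) P := fun i =>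
    hU2.mono' ((hUi i).pow_const 2).aestronglyMeasurable (ae_of_all _ fun ω => by
      rw [Real.norm_eq_abs, abs_of_nonneg (sq_nonneg _)]; exact coord (U ω) i)
  have hVsq : ∀ i, Integrable (fun ω => V ω i ^ 2) P := fun i =>
    hV2.mono' ((hVi i).pow_const 2).aestronglyMeasurable (ae_of_all _ fun ω => by
      rw [Real.norm_eq_abs, abs_of_nonneg (sq_nonneg _)]; exact coord (V ω) i)
  have hUU : ∀ i j, Integrable (fun ω => U ω i * U ω j) P := fun i j =>
    my_int_mul (hUi i).aestronglyMeasurable (hUi j).aestronglyMeasurable (hUsq i) (hUsq j)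
  have hVV : ∀ i j, Integrable (fun ω => V ω i * V ω j) P := fun i j =>
    my_int_mul (hVi i).aestronglyMeasurable (hVi j).aestronglyMeasurable (hVsq i) (hVsq j)
  -- key inner identity
  have hinner : ∀ x y : EuclideanSpace ℝ (Fin d),
      ⟪T x, y⟫ = ∫ ω, (⟪U ω, y⟫ * ⟪U ω, x⟫ - ⟪V ω, y⟫ * ⟪V ω, x⟫) ∂P := by
    intro x y
    have hTx : ∀ i, T x i = ∑ j, Mmat i j * x j := by
      intro i
      rfl
    have hpt : ∀ ω, ⟪U ω, y⟫ * ⟪U ω, x⟫ - ⟪V ω, y⟫ * ⟪V ω, x⟫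
        = ∑ i, ∑ j, ((U ω i * U ω j - V ω i * V ω j) * x j * y i) := by
      intro ω
      simp only [PiLp.inner_apply, RCLike.inner_apply, conj_trivial]
      rw [Finset.sum_mul_sum, Finset.sum_mul_sum, ← Finset.sum_sub_distrib]
      exact Finset.sum_congr rfl fun i _ => by
        rw [← Finset.sum_sub_distrib]
        exact Finset.sum_congr rfl fun j _ => by ring
    have hterm : ∀ i j, Integrable (fun ω => (U ω i * U ω j - V ω i * V ω j) * x j * y i) P :=
      fun i j => (((hUU i j).sub (hVV i j)).mul_const (x j)).mul_const (y i)
    calc ⟪T x, y⟫ = ∑ i, T x i * y i := by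
          simp [PiLp.inner_apply, RCLike.inner_apply, conj_trivial]
          exact Finset.sum_congr rfl fun i _ => mul_comm _ _
      _ = ∑ i, ∑ j, (Mmat i j * x j * y i) := by
          refine Finset.sum_congr rfl fun i _ => ?_
          rw [hTx i, Finset.sum_mul]
      _ = ∑ i, ∑ j, ∫ ω, ((U ω i * U ω j - V ω i * V ω j) * x j * y i) ∂P := by
          refine Finset.sum_congr rfl fun i _ => Finset.sum_congr rfl fun j _ => ?_
          rw [integral_mul_const, integral_mul_const, integral_sub (hUU i j) (hVV i j)]
          simp [hMdef, Matrix.sub_apply]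
      _ = ∑ i, ∫ ω, (∑ j, (U ω i * U ω j - V ω i * V ω j) * x j * y i) ∂P := by
          refine Finset.sum_congr rfl fun i _ => ?_
          rw [integral_finset_sum _ fun j _ => hterm i j]
      _ = ∫ ω, (∑ i, ∑ j, (U ω i * U ω j - V ω i * V ω j) * x j * y i) ∂P := by
          rw [integral_finset_sum _ fun i _ => integrable_finset_sum _ fun j _ => hterm i j]
      _ = ∫ ω, (⟪U ω, y⟫ * ⟪U ω, x⟫ - ⟪V ω, y⟫ * ⟪V ω, x⟫) ∂P := by
          exact integral_congr_ae (ae_of_all _ fun ω => (hpt ω).symm)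
  -- bound on the bilinear form
  have key : ∀ x y : EuclideanSpace ℝ (Fin d),
      |⟪T x, y⟫| ≤ 2 * C * Real.sqrt E2 * (‖x‖ * ‖y‖) := by
    intro x y
    rw [hinner x y]
    have hWm : Measurable fun ω => U ω - V ω := hU.sub hV
    obtain ⟨iUx, bUx⟩ := my_inner_sq P U hU hU2 x
    obtain ⟨iVy, bVy⟩ := my_inner_sq P V hV hV2 y
    obtain ⟨iWx, bWx⟩ := my_inner_sq P (fun ω => U ω - V ω) hWm hUV2 x
    obtain ⟨iWy, bWy⟩ := my_inner_sq P (fun ω => U ω - V ω) hWm hUV2 y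
    have mUx : AEStronglyMeasurable (fun ω => (⟪U ω, x⟫ : ℝ)) P :=
      (hU.inner_const (c := x)).aestronglyMeasurable
    have mVy : AEStronglyMeasurable (fun ω => (⟪V ω, y⟫ : ℝ)) P :=
      (hV.inner_const (c := y)).aestronglyMeasurable
    have mWx : AEStronglyMeasurable (fun ω => (⟪U ω - V ω, x⟫ : ℝ)) P :=
      (hWm.inner_const (c := x)).aestronglyMeasurable
    have mWy : AEStronglyMeasurable (fun ω => (⟪U ω - V ω, y⟫ : ℝ)) P :=
      (hWm.inner_const (c := y)).aestronglyMeasurable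
    have hsplit : (fun ω => ⟪U ω, y⟫ * ⟪U ω, x⟫ - ⟪V ω, y⟫ * ⟪V ω, x⟫)
        = fun ω => ⟪U ω - V ω, y⟫ * ⟪U ω, x⟫ + ⟪V ω, y⟫ * ⟪U ω - V ω, x⟫ := by
      funext ω
      rw [inner_sub_left, inner_sub_left]
      ring
    have int1 : Integrable (fun ω => (⟪U ω - V ω, y⟫ : ℝ) * ⟪U ω, x⟫) P :=
      my_int_mul mWy mUx iWy iUx
    have int2 : Integrable (fun ω => (⟪V ω, y⟫ : ℝ) * ⟪U ω - V ω, x⟫) P :=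
      my_int_mul mVy mWx iVy iWx
    rw [hsplit, integral_add int1 int2]
    have cs1 := my_cs mWy mUx iWy iUx
    have cs2 := my_cs mVy mWx iVy iWx
    -- sqrt bounds
    have sWy : Real.sqrt (∫ ω, (⟪U ω - V ω, y⟫ : ℝ) ^ 2 ∂P) ≤ Real.sqrt E2 * ‖y‖ := by
      refine le_trans (Real.sqrt_le_sqrt bWy) ?_
      rw [Real.sqrt_mul hE2, Real.sqrt_sq (norm_nonneg y)]
    have sWx : Real.sqrt (∫ ω, (⟪U ω - V ω, x⟫ : ℝ) ^ 2 ∂P) ≤ Real.sqrt E2 * ‖x‖ := by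
      refine le_trans (Real.sqrt_le_sqrt bWx) ?_
      rw [Real.sqrt_mul hE2, Real.sqrt_sq (norm_nonneg x)]
    have sUx : Real.sqrt (∫ ω, (⟪U ω, x⟫ : ℝ) ^ 2 ∂P) ≤ C * ‖x‖ := by
      refine le_trans (Real.sqrt_le_sqrt (le_trans bUx
        (mul_le_mul_of_nonneg_right hUC (sq_nonneg _)))) ?_
      rw [← mul_pow, Real.sqrt_sq (by positivity)]
    have sVy : Real.sqrt (∫ ω, (⟪V ω, y⟫ : ℝ) ^ 2 ∂P) ≤ C * ‖y‖ := by
      refine le_trans (Real.sqrt_le_sqrt (le_trans bVy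
        (mul_le_mul_of_nonneg_right hVC (sq_nonneg _)))) ?_
      rw [← mul_pow, Real.sqrt_sq (by positivity)]
    calc |(∫ ω, (⟪U ω - V ω, y⟫ : ℝ) * ⟪U ω, x⟫ ∂P)
            + ∫ ω, (⟪V ω, y⟫ : ℝ) * ⟪U ω - V ω, x⟫ ∂P|
        ≤ |∫ ω, (⟪U ω - V ω, y⟫ : ℝ) * ⟪U ω, x⟫ ∂P|
            + |∫ ω, (⟪V ω, y⟫ : ℝ) * ⟪U ω - V ω, x⟫ ∂P| := abs_add_le _ _
      _ ≤ (Real.sqrt E2 * ‖y‖) * (C * ‖x‖) + (C * ‖y‖) * (Real.sqrt E2 * ‖x‖) := by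
          refine add_le_add (le_trans cs1 ?_) (le_trans cs2 ?_)
          · exact mul_le_mul sWy sUx (Real.sqrt_nonneg _) (by positivity)
          · exact mul_le_mul sVy sWx (Real.sqrt_nonneg _) (by positivity)
      _ = 2 * C * Real.sqrt E2 * (‖x‖ * ‖y‖) := by ring
  -- conclude
  have hK : 0 ≤ 2 * C * Real.sqrt E2 :=
    mul_nonneg (mul_nonneg (by norm_num) hC) (Real.sqrt_nonneg _)
  refine ContinuousLinearMap.opNorm_le_bound _ hK fun x => ?_
  have hv := key x (T x)
  rw [real_inner_self_eq_norm_sq, abs_of_nonneg (sq_nonneg _)] at hv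
  rcases eq_or_lt_of_le (norm_nonneg (T x)) with h0 | h0
  · rw [← h0]
    exact mul_nonneg hK (norm_nonneg x)
  · have h2 : ‖T x‖ * ‖T x‖ ≤ (2 * C * Real.sqrt E2 * ‖x‖) * ‖T x‖ := by
      calc ‖T x‖ * ‖T x‖ = ‖T x‖ ^ 2 := (sq ‖T x‖).symm
        _ ≤ 2 * C * Real.sqrt E2 * (‖x‖ * ‖T x‖) := hv
        _ = (2 * C * Real.sqrt E2 * ‖x‖) * ‖T x‖ := by ring
    exact le_of_mul_le_mul_right h2 h0
end

section
/- Let θ̂ ∈ E, R > 0, and let B be the closed ball of radius R centered at θ̂. Let g : E → E be continuously differentiable on B with g(θ̂) = 0, and suppose that for every θ ∈ B the derivative g'(θ) is self-adjoint and satisfies −L‖v‖² ≤ ⟪v, g'(θ) v⟫ ≤ −m‖v‖² for all v ∈ E, with constants 0 < m ≤ L. Let H : E → E be a self-adjoint linear map with h_min‖v‖² ≤ ⟪v, H v⟫ ≤ h_max‖v‖² for all v (0 < h_min ≤ h_max), let α > 0, and define the iterates θ^(t+1) = θ^(t) + α·H·g(θ^(t)) with θ^(0) ∈ B; assume θ^(t)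 ∈ B for all t ≥ 0. Then for all t ≥ 0, ‖θ^(t) − θ̂‖ ≤ √(h_max/h_min) · ρ^t · ‖θ^(0) − θ̂‖, where ρ = max(|1 − α·m·h_min|, |1 − α·L·h_max|). -/
open scoped RealInnerProductSpace

lemma sa_norm_bound {d : ℕ} (B : EuclideanSpace ℝ (Fin d) →ₗ[ℝ] EuclideanSpace ℝ (Fin d))
    (hsa : ∀ u v : EuclideanSpace ℝ (Fin d), ⟪B u, v⟫ = ⟪u, B v⟫) (C : ℝ)
    (hC : ∀ v : EuclideanSpace ℝ (Fin d), |⟪v, B v⟫| ≤ C * ‖v‖ ^ 2) :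
    ∀ v : EuclideanSpace ℝ (Fin d), ‖B v‖ ≤ C * ‖v‖ := by
  -- polarization identity
  have key : ∀ u v : EuclideanSpace ℝ (Fin d),
      4 * ⟪u, B v⟫ = ⟪u + v, B (u + v)⟫ - ⟪u - v, B (u - v)⟫ := by
    intro u v
    have h1 : ⟪v, B u⟫ = ⟪u, B v⟫ := by
      rw [← hsa v u, real_inner_comm]
    simp only [map_add, map_sub, inner_add_left, inner_add_right, inner_sub_left,
      inner_sub_right, h1]
    ring
  intro v
  by_cases hv : v = 0
  · simp [hv]
  by_cases hBv : B v = 0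
  · have := hC v
    rw [hBv] at this ⊢
    simp only [inner_zero_right, abs_zero, norm_zero] at this ⊢
    have hv2 : (0:ℝ) < ‖v‖ ^ 2 := pow_pos (norm_pos_iff.mpr hv) 2
    have hC0 : 0 ≤ C := by nlinarith
    positivity
  · set u : EuclideanSpace ℝ (Fin d) := (‖v‖ / ‖B v‖) • B v with hu
    have hBvpos : (0:ℝ) < ‖B v‖ := norm_pos_iff.mpr hBv
    have hnu : ‖u‖ = ‖v‖ := by
      rw [hu, norm_smul]
      rw [Real.norm_eq_abs, abs_of_nonneg (by positivity)]
      field_simp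
    have hinner : ⟪u, B v⟫ = ‖v‖ * ‖B v‖ := by
      rw [hu, real_inner_smul_left, real_inner_self_eq_norm_sq]
      field_simp
    have hkey := key u v
    have hpar : ‖u + v‖ ^ 2 + ‖u - v‖ ^ 2 = 2 * (‖u‖ ^ 2 + ‖v‖ ^ 2) := by
      have := parallelogram_law_with_norm ℝ u v
      nlinarith [this]
    have h1 := hC (u + v)
    have h2 := hC (u - v)
    have hb1 : (⟪u + v, B (u + v)⟫ : ℝ) ≤ C * ‖u + v‖ ^ 2 := (abs_le.mp h1).2
    have hb2 : -(C * ‖u - v‖ ^ 2) ≤ (⟪u - v, B (u - v)⟫ : ℝ) := (abs_le.mp h2).1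
    have h4 : 4 * (‖v‖ * ‖B v‖) ≤ C * (‖u + v‖ ^ 2 + ‖u - v‖ ^ 2) := by
      rw [← hinner]; rw [hkey]; ring_nf; nlinarith
    rw [hpar, hnu] at h4
    have hvpos : (0:ℝ) < ‖v‖ := norm_pos_iff.mpr hv
    nlinarith


lemma form_bound {d : ℕ} (P N : EuclideanSpace ℝ (Fin d) →ₗ[ℝ] EuclideanSpace ℝ (Fin d))
    (hPsym : ∀ u w : EuclideanSpace ℝ (Fin d), ⟪u, P w⟫ = ⟪w, P u⟫)
    (hNsym : ∀ u w : EuclideanSpace ℝ (Fin d), ⟪u, N w⟫ = ⟪w, N u⟫)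
    (hNpos : ∀ v : EuclideanSpace ℝ (Fin d), 0 ≤ ⟪v, N v⟫)
    (hNdef : ∀ v : EuclideanSpace ℝ (Fin d), (⟪v, N v⟫ : ℝ) = 0 → v = 0)
    (r : ℝ) (hr : 0 ≤ r)
    (hPN : ∀ w : EuclideanSpace ℝ (Fin d), |⟪w, P w⟫| ≤ r * ⟪w, N w⟫) :
    ∀ u w : EuclideanSpace ℝ (Fin d),
      |⟪u, P w⟫| ≤ r * Real.sqrt ⟪u, N u⟫ * Real.sqrt ⟪w, N w⟫ := by
  have key : ∀ u w : EuclideanSpace ℝ (Fin d),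
      (⟪u, P w⟫ : ℝ) ≤ r / 2 * (⟪u, N u⟫ + ⟪w, N w⟫) := by
    intro u w
    have pol : 4 * (⟪u, P w⟫ : ℝ) = ⟪u + w, P (u + w)⟫ - ⟪u - w, P (u - w)⟫ := by
      simp only [map_add, map_sub, inner_add_left, inner_add_right, inner_sub_left,
        inner_sub_right, hPsym w u]
      ring
    have polN : (⟪u + w, N (u + w)⟫ : ℝ) + ⟪u - w, N (u - w)⟫ = 2 * (⟪u, N u⟫ + ⟪w, N w⟫) := by
      simp only [map_add, map_sub, inner_add_left, inner_add_right, inner_sub_left,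
        inner_sub_right, hNsym w u]
      ring
    have h1 := (abs_le.mp (hPN (u + w))).2
    have h2 := (abs_le.mp (hPN (u - w))).1
    nlinarith
  intro u w
  by_cases hu : u = 0
  · simp only [hu, inner_zero_left, abs_zero]
    positivity
  by_cases hw : w = 0
  · simp only [hw, map_zero, inner_zero_right, abs_zero]
    positivity
  · have hNu : (0:ℝ) < ⟪u, N u⟫ := lt_of_le_of_ne (hNpos u) (fun h => hu (hNdef u h.symm))
    have hNw : (0:ℝ) < ⟪w, N w⟫ := lt_of_le_of_ne (hNpos w) (fun h => hw (hNdef w h.symm))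
    set a := Real.sqrt ⟪u, N u⟫ with ha
    set b := Real.sqrt ⟪w, N w⟫ with hb
    have hapos : 0 < a := Real.sqrt_pos.mpr hNu
    have hbpos : 0 < b := Real.sqrt_pos.mpr hNw
    have ha2 : a ^ 2 = ⟪u, N u⟫ := Real.sq_sqrt (le_of_lt hNu)
    have hb2 : b ^ 2 = ⟪w, N w⟫ := Real.sq_sqrt (le_of_lt hNw)
    set t := Real.sqrt (b / a) with ht
    have htpos : 0 < t := Real.sqrt_pos.mpr (by positivity)
    have ht2 : t ^ 2 = b / a := Real.sq_sqrt (by positivity)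
    have habs : ∀ u' : EuclideanSpace ℝ (Fin d),
        (⟪u', N u'⟫ : ℝ) = ⟪u, N u⟫ → (⟪u', P w⟫ : ℝ) ≤ r * a * b → True := fun _ _ _ => trivial
    -- scaled polarization
    have main : ∀ u' : EuclideanSpace ℝ (Fin d), (⟪u', N u'⟫ : ℝ) = a ^ 2 →
        (⟪u', P w⟫ : ℝ) ≤ r * a * b := by
      intro u' hu'
      have := key (t • u') (t⁻¹ • w)
      simp only [map_smul] at this
      simp only [real_inner_smul_left, real_inner_smul_right, smul_eq_mul] at this
      have e1 : t * (t * ⟪u', N u'⟫) = a * b := by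
        rw [hu']
        have : t * t = b / a := by nlinarith
        rw [show t * (t * (a^2)) = (t * t) * a^2 by ring, this]
        field_simp
      have e2 : t⁻¹ * (t⁻¹ * ⟪w, N w⟫) = a * b := by
        rw [← hb2]
        have htt : t⁻¹ * t⁻¹ = a / b := by
          rw [← mul_inv]
          rw [show t * t = b / a by nlinarith]
          rw [inv_div]
        rw [show t⁻¹ * (t⁻¹ * b^2) = (t⁻¹ * t⁻¹) * b^2 by ring, htt]
        field_simp
      have e3 : t⁻¹ * (t * ⟪u', P w⟫) = ⟪u', P w⟫ := by
        field_simp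
      rw [e1, e2, e3] at this
      nlinarith
    have hpos := main u ha2.symm
    have hneg := main (-u) (by simp [inner_neg_neg, ha2])
    rw [inner_neg_left] at hneg
    rw [abs_le]
    constructor
    · nlinarith
    · nlinarith

set_option maxHeartbeats 2000000 in
/-- Theorem 5 of the paper: algorithmic convergence. Let `g` be continuously
differentiable on the closed ball `B` of radius `R` around its root `θ̂`, with self-adjoint
derivative satisfying `-L‖v‖² ≤ ⟪v, g'(θ) v⟫ ≤ -m‖v‖²` on `B` (`0 < m ≤ L`). Let `H` be a
self-adjoint preconditioner with `h₁‖v‖² ≤ ⟪v, H v⟫ ≤ h₂‖v‖²` (`0 < h₁ ≤ h₂`) and `α > 0`.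
Then the iterates `θ^(t+1) = θ^(t) + α H g(θ^(t))` staying in `B` satisfy
`‖θ^(t) - θ̂‖ ≤ √(h₂/h₁) ρᵗ ‖θ^(0) - θ̂‖` where `ρ = max(|1 - α m h₁|, |1 - α L h₂|)`. -/
theorem stmt_12 {d : ℕ} (θhat : EuclideanSpace ℝ (Fin d)) (R : ℝ) (hR : 0 < R)
    (B : Set (EuclideanSpace ℝ (Fin d))) (hB : B = Metric.closedBall θhat R)
    (g : EuclideanSpace ℝ (Fin d) → EuclideanSpace ℝ (Fin d))
    (g' : EuclideanSpace ℝ (Fin d) → EuclideanSpace ℝ (Fin d) →L[ℝ] EuclideanSpace ℝ (Fin d))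
    (hderiv : ∀ θ ∈ B, HasFDerivWithinAt g (g' θ) B θ)
    (hcont : ContinuousOn g' B)
    (hroot : g θhat = 0)
    (m L : ℝ) (hm : 0 < m) (hmL : m ≤ L)
    (hSA : ∀ θ ∈ B, ∀ u v : EuclideanSpace ℝ (Fin d), ⟪g' θ u, v⟫ = ⟪u, g' θ v⟫)
    (hlb : ∀ θ ∈ B, ∀ v : EuclideanSpace ℝ (Fin d), -L * ‖v‖ ^ 2 ≤ ⟪v, g' θ v⟫)
    (hub : ∀ θ ∈ B, ∀ v : EuclideanSpace ℝ (Fin d), ⟪v, g' θ v⟫ ≤ -m * ‖v‖ ^ 2)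
    (H : EuclideanSpace ℝ (Fin d) →L[ℝ] EuclideanSpace ℝ (Fin d))
    (hHSA : ∀ u v : EuclideanSpace ℝ (Fin d), ⟪H u, v⟫ = ⟪u, H v⟫)
    (hmin hmax : ℝ) (hhmin : 0 < hmin) (hhle : hmin ≤ hmax)
    (hHlb : ∀ v : EuclideanSpace ℝ (Fin d), hmin * ‖v‖ ^ 2 ≤ ⟪v, H v⟫)
    (hHub : ∀ v : EuclideanSpace ℝ (Fin d), ⟪v, H v⟫ ≤ hmax * ‖v‖ ^ 2)
    (α : ℝ) (hα : 0 < α)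
    (θseq : ℕ → EuclideanSpace ℝ (Fin d))
    (hrec : ∀ t : ℕ, θseq (t + 1) = θseq t + α • H (g (θseq t)))
    (hin : ∀ t : ℕ, θseq t ∈ B) :
    ∀ t : ℕ, ‖θseq t - θhat‖ ≤
      Real.sqrt (hmax / hmin) *
        (max |1 - α * m * hmin| |1 - α * L * hmax|) ^ t * ‖θseq 0 - θhat‖ := by
  classical
  -- H is bijective; obtain its inverse N
  obtain ⟨N, hHN, hNH⟩ : ∃ N : EuclideanSpace ℝ (Fin d) →ₗ[ℝ] EuclideanSpace ℝ (Fin d), (∀ v, H (N v) = v) ∧ (∀ v, N (H v) = v) := by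
    have hinj : Function.Injective (H.toLinearMap) := by
      intro x y hxy
      simp only [ContinuousLinearMap.coe_coe] at hxy
      have h0 : H (x - y) = 0 := by rw [map_sub, hxy, sub_self]
      have h1 := hHlb (x - y)
      rw [h0] at h1
      simp only [inner_zero_right] at h1
      have hsq : ‖x - y‖ ^ 2 = 0 := le_antisymm (by nlinarith) (sq_nonneg _)
      have h2 : x - y = 0 := by
        simpa [pow_eq_zero_iff] using hsq
      exact sub_eq_zero.mp h2
    have hbij : Function.Bijective (H.toLinearMap) :=
      ⟨hinj, (LinearMap.injective_iff_surjective).mp hinj⟩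
    refine ⟨(LinearEquiv.ofBijective H.toLinearMap hbij).symm.toLinearMap, fun v => ?_, fun v => ?_⟩
    · exact (LinearEquiv.ofBijective H.toLinearMap hbij).apply_symm_apply v
    · exact (LinearEquiv.ofBijective H.toLinearMap hbij).symm_apply_apply v
  -- basic facts about N
  have hNsa : ∀ u v : EuclideanSpace ℝ (Fin d), (⟪u, N v⟫ : ℝ) = ⟪N u, v⟫ := by
    intro u v
    calc (⟪u, N v⟫ : ℝ) = ⟪H (N u), N v⟫ := by rw [hHN]
      _ = ⟪N u, H (N v)⟫ := hHSA _ _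
      _ = ⟪N u, v⟫ := by rw [hHN]
  have hNsym : ∀ u v : EuclideanSpace ℝ (Fin d), (⟪u, N v⟫ : ℝ) = ⟪v, N u⟫ := by
    intro u v
    rw [hNsa, real_inner_comm]
  have hNform : ∀ v : EuclideanSpace ℝ (Fin d), (⟪v, N v⟫ : ℝ) = ⟪N v, H (N v)⟫ := by
    intro v
    have h1 : (⟪H (N v), N v⟫ : ℝ) = ⟪N v, H (N v)⟫ := hHSA _ _
    rw [← h1, hHN]
  have hNpos : ∀ v : EuclideanSpace ℝ (Fin d), (0:ℝ) ≤ ⟪v, N v⟫ := by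
    intro v
    rw [hNform]
    have := hHlb (N v)
    nlinarith [sq_nonneg ‖N v‖]
  -- lower comparison : hmin * q v ≤ ‖v‖²
  have hql : ∀ v : EuclideanSpace ℝ (Fin d), hmin * ⟪v, N v⟫ ≤ ‖v‖ ^ 2 := by
    intro v
    by_cases hv : N v = 0
    · have hv0 : v = 0 := by rw [← hHN v, hv, map_zero]
      simp [hv0]
    · rw [hNform]
      have hCS : (⟪N v, H (N v)⟫ : ℝ) ≤ ‖N v‖ * ‖H (N v)‖ := real_inner_le_norm _ _
      have hlo := hHlb (N v)
      have hwpos : (0:ℝ) < ‖N v‖ := norm_pos_iff.mpr hv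
      have hHNv : ‖H (N v)‖ = ‖v‖ := by rw [hHN]
      rw [hHNv] at hCS
      have h1 : hmin * ‖N v‖ ≤ ‖v‖ := by nlinarith
      nlinarith [norm_nonneg v, hHlb (N v), sq_nonneg ‖N v‖]
  -- operator bound on H - midpoint
  have hqu : ∀ v : EuclideanSpace ℝ (Fin d), ‖v‖ ^ 2 ≤ hmax * ⟪v, N v⟫ := by
    have hBop : ∀ w : EuclideanSpace ℝ (Fin d), ‖H w - ((hmin + hmax) / 2) • w‖ ≤ (hmax - hmin) / 2 * ‖w‖ := by
      set μ : ℝ := (hmin + hmax) / 2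
      set r0 : ℝ := (hmax - hmin) / 2
      have := sa_norm_bound (H.toLinearMap - μ • LinearMap.id) ?_ r0 ?_
      · intro w
        simpa using this w
      · intro u v
        simp only [LinearMap.sub_apply, LinearMap.smul_apply, LinearMap.id_apply,
          ContinuousLinearMap.coe_coe, inner_sub_left, inner_sub_right,
          real_inner_smul_left, real_inner_smul_right, hHSA]
      · intro v
        simp only [LinearMap.sub_apply, LinearMap.smul_apply, LinearMap.id_apply,
          ContinuousLinearMap.coe_coe, inner_sub_right, real_inner_smul_right,
          real_inner_self_eq_norm_sq]
        rw [abs_le]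
        constructor
        · have := hHlb v
          simp only [μ, r0]; nlinarith
        · have := hHub v
          simp only [μ, r0]; nlinarith
    intro v
    set w := N v with hw
    have hveq : v = H w := (hHN v).symm
    have hbound := hBop w
    have hsq : ‖H w - ((hmin + hmax) / 2) • w‖ ^ 2 ≤ ((hmax - hmin) / 2) ^ 2 * ‖w‖ ^ 2 := by
      have h0 := norm_nonneg (H w - ((hmin + hmax) / 2) • w)
      nlinarith [norm_nonneg w]
    have hexp : ‖H w - ((hmin + hmax) / 2) • w‖ ^ 2
        = ‖H w‖ ^ 2 - 2 * ((hmin + hmax) / 2) * ⟪H w, w⟫ + ((hmin + hmax) / 2) ^ 2 * ‖w‖ ^ 2 := by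
      rw [norm_sub_sq_real, real_inner_smul_right, norm_smul]
      rw [Real.norm_eq_abs]
      rcases abs_cases ((hmin + hmax) / 2) with ⟨h, _⟩ | ⟨h, _⟩ <;> rw [h] <;> ring
    rw [hexp] at hsq
    rw [hNform, ← hw, hveq]
    have hHww : (⟪H w, w⟫ : ℝ) = ⟪w, H w⟫ := real_inner_comm _ _
    rw [hHww] at hsq
    have hub' := hHub w
    nlinarith [sq_nonneg ‖w‖, hHlb w]
  have hNdef : ∀ v : EuclideanSpace ℝ (Fin d), (⟪v, N v⟫ : ℝ) = 0 → v = 0 := by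
    intro v hv
    have := hqu v
    rw [hv] at this
    have : ‖v‖ ^ 2 = 0 := le_antisymm (by linarith) (sq_nonneg _)
    simpa [pow_eq_zero_iff] using this
  -- constants
  set ρ : ℝ := max |1 - α * m * hmin| |1 - α * L * hmax| with hρ
  set c : ℝ := 1 - α * (m * hmin + L * hmax) / 2 with hc
  set r1 : ℝ := α * (L * hmax - m * hmin) / 2 with hr1
  have hr1pos : 0 ≤ r1 := by
    have : m * hmin ≤ L * hmax := by nlinarith
    rw [hr1]; nlinarith
  have hcρ : |c| + r1 ≤ ρ := by
    rcases le_or_gt 0 c with h | h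
    · have h1 : |c| + r1 = 1 - α * m * hmin := by rw [abs_of_nonneg h, hc, hr1]; ring
      rw [h1, hρ]
      exact le_trans (le_abs_self _) (le_max_left _ _)
    · have h1 : |c| + r1 = -(1 - α * L * hmax) := by rw [abs_of_neg h, hc, hr1]; ring
      rw [h1, hρ]
      exact le_trans (neg_le_abs _) (le_max_right _ _)
  have hρpos : 0 ≤ ρ := le_trans (abs_nonneg _) (le_max_left _ _)
  -- Cauchy-Schwarz for the N-form
  have hCSq : ∀ u w : EuclideanSpace ℝ (Fin d), |(⟪u, N w⟫ : ℝ)| ≤ Real.sqrt ⟪u, N u⟫ * Real.sqrt ⟪w, N w⟫ := by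
    have := form_bound N N hNsym hNsym hNpos hNdef 1 zero_le_one
      (fun w => by rw [abs_of_nonneg (hNpos w), one_mul])
    intro u w
    have h := this u w
    rw [one_mul] at h
    exact h
  -- the key contraction bound for T θ = id + α H g'(θ)
  have hTbound : ∀ θ ∈ B, ∀ u w : EuclideanSpace ℝ (Fin d),
      |(⟪u, N (w + α • H (g' θ w))⟫ : ℝ)| ≤
        ρ * Real.sqrt ⟪u, N u⟫ * Real.sqrt ⟪w, N w⟫ := by
    intro θ hθ u w
    set P : EuclideanSpace ℝ (Fin d) →ₗ[ℝ] EuclideanSpace ℝ (Fin d) := α • ((g' θ) : EuclideanSpace ℝ (Fin d) →ₗ[ℝ] EuclideanSpace ℝ (Fin d)) + (1 - c) • N with hP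
    have hPapp : ∀ x : EuclideanSpace ℝ (Fin d), P x = α • (g' θ x) + (1 - c) • N x := by
      intro x
      rw [hP]
      simp only [LinearMap.add_apply, LinearMap.smul_apply, ContinuousLinearMap.coe_coe]
    have hPinner : ∀ x y : EuclideanSpace ℝ (Fin d), (⟪x, P y⟫ : ℝ) = α * ⟪x, g' θ y⟫ + (1 - c) * ⟪x, N y⟫ := by
      intro x y
      rw [hPapp, inner_add_right, real_inner_smul_right, real_inner_smul_right]
    have hPsym : ∀ x y : EuclideanSpace ℝ (Fin d), (⟪x, P y⟫ : ℝ) = ⟪y, P x⟫ := by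
      intro x y
      rw [hPinner, hPinner, hNsym]
      have : (⟪x, g' θ y⟫ : ℝ) = ⟪y, g' θ x⟫ := by
        rw [← hSA θ hθ y x, real_inner_comm]
      rw [this]
    have hPdiag : ∀ x : EuclideanSpace ℝ (Fin d), |(⟪x, P x⟫ : ℝ)| ≤ r1 * ⟪x, N x⟫ := by
      intro x
      rw [hPinner, abs_le]
      have h1 := hub θ hθ x
      have h2 := hlb θ hθ x
      have h3 := hql x
      have h4 := hqu x
      have h5 := hNpos x
      have hL : (0:ℝ) < L := lt_of_lt_of_le hm hmL
      constructor
      · rw [hr1, hc]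
        have key : α * (-L * ‖x‖ ^ 2) ≤ α * ⟪x, g' θ x⟫ :=
          mul_le_mul_of_nonneg_left h2 hα.le
        have key2 : α * L * ‖x‖ ^ 2 ≤ α * L * (hmax * ⟪x, N x⟫) :=
          mul_le_mul_of_nonneg_left h4 (by positivity)
        linarith
      · rw [hr1, hc]
        have key : α * ⟪x, g' θ x⟫ ≤ α * (-m * ‖x‖ ^ 2) :=
          mul_le_mul_of_nonneg_left h1 hα.le
        have key2 : α * m * (hmin * ⟪x, N x⟫) ≤ α * m * ‖x‖ ^ 2 :=
          mul_le_mul_of_nonneg_left h3 (by positivity)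
        linarith
    have hFB := form_bound P N hPsym hNsym hNpos hNdef r1 hr1pos hPdiag u w
    -- decompose T w = c • w + stuff
    have hTw : (⟪u, N (w + α • H (g' θ w))⟫ : ℝ) = c * ⟪u, N w⟫ + ⟪u, P w⟫ := by
      rw [map_add, inner_add_right, map_smul, real_inner_smul_right]
      have hNHg : N (H (g' θ w)) = g' θ w := hNH _
      rw [hNHg, hPinner]
      ring
    rw [hTw]
    have hsq1 : 0 ≤ Real.sqrt ⟪u, N u⟫ := Real.sqrt_nonneg _
    have hsq2 : 0 ≤ Real.sqrt ⟪w, N w⟫ := Real.sqrt_nonneg _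
    have step1 : |c * ⟪u, N w⟫ + ⟪u, P w⟫| ≤ |c| * |(⟪u, N w⟫ : ℝ)| + |(⟪u, P w⟫ : ℝ)| := by
      refine le_trans (abs_add_le _ _) ?_
      rw [abs_mul]
    have step2 : |c| * |(⟪u, N w⟫ : ℝ)| ≤ |c| * (Real.sqrt ⟪u, N u⟫ * Real.sqrt ⟪w, N w⟫) :=
      mul_le_mul_of_nonneg_left (hCSq u w) (abs_nonneg c)
    have step3 := mul_le_mul_of_nonneg_right hcρ (mul_nonneg hsq1 hsq2)
    nlinarith [hFB, abs_nonneg ((⟪u, P w⟫ : ℝ))]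
  -- one-step contraction in the N-form norm
  have hstep : ∀ t : ℕ,
      Real.sqrt ⟪θseq (t+1) - θhat, N (θseq (t+1) - θhat)⟫ ≤
        ρ * Real.sqrt ⟪θseq t - θhat, N (θseq t - θhat)⟫ := by
    intro t
    set η : EuclideanSpace ℝ (Fin d) := θseq t - θhat with hη
    set u : EuclideanSpace ℝ (Fin d) := θseq (t+1) - θhat with hu
    set γ : ℝ → EuclideanSpace ℝ (Fin d) := fun s => θhat + s • η with hγ
    have hγ0 : γ 0 = θhat := by simp [hγ]
    have hγ1 : γ 1 = θseq t := by simp [hγ, hη]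
    have hηR : ‖η‖ ≤ R := by
      have := hin t
      rw [hB, Metric.mem_closedBall, dist_eq_norm] at this
      exact this
    have hmem : ∀ s ∈ Set.Icc (0:ℝ) 1, γ s ∈ B := by
      intro s hs
      rw [hB, Metric.mem_closedBall, dist_eq_norm]
      have hγs : γ s - θhat = s • η := add_sub_cancel_left θhat (s • η)
      rw [hγs, norm_smul, Real.norm_eq_abs, abs_of_nonneg hs.1]
      nlinarith [norm_nonneg η, hs.2]
    set φ : ℝ → ℝ := fun s => ⟪N u, γ s + α • H (g (γ s))⟫ with hφdef
    have hφ : ∀ s ∈ Set.Icc (0:ℝ) 1, HasDerivWithinAt φ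
        (⟪N u, η + α • H (g' (γ s) η)⟫) (Set.Icc (0:ℝ) 1) s := by
      intro s hs
      have hγd : HasDerivWithinAt γ η (Set.Icc (0:ℝ) 1) s := by
        have h1 : HasDerivAt (fun s : ℝ => θhat + s • η) ((1:ℝ) • η) s :=
          ((hasDerivAt_id s).smul_const η).const_add θhat
        rw [one_smul] at h1
        exact h1.hasDerivWithinAt
      have hg := hderiv (γ s) (hmem s hs)
      have hHg : HasFDerivWithinAt (fun x => H (g x)) (H.comp (g' (γ s))) B (γ s) :=
        (H.hasFDerivAt).comp_hasFDerivWithinAt (γ s) hg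
      have hGd : HasFDerivWithinAt (fun x => x + α • H (g x))
          (ContinuousLinearMap.id ℝ (EuclideanSpace ℝ (Fin d))
            + α • (H.comp (g' (γ s)))) B (γ s) :=
        (hasFDerivWithinAt_id _ _).add (hHg.const_smul α)
      have hcomp : HasDerivWithinAt (fun s => γ s + α • H (g (γ s)))
          ((ContinuousLinearMap.id ℝ (EuclideanSpace ℝ (Fin d))
            + α • (H.comp (g' (γ s)))) η) (Set.Icc (0:ℝ) 1) s :=
        hGd.comp_hasDerivWithinAt s hγd (fun x hx => hmem x hx)
      have hφd := ((innerSL ℝ (N u)).hasFDerivAt).comp_hasDerivWithinAt s hcomp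
      simp at hφd
      exact hφd
    have hbound : ∀ s ∈ Set.Icc (0:ℝ) 1,
        ‖(⟪N u, η + α • H (g' (γ s) η)⟫ : ℝ)‖ ≤
          ρ * Real.sqrt ⟪u, N u⟫ * Real.sqrt ⟪η, N η⟫ := by
      intro s hs
      rw [Real.norm_eq_abs, ← hNsa]
      exact hTbound (γ s) (hmem s hs) u η
    have hMVT := Convex.norm_image_sub_le_of_norm_hasDerivWithin_le hφ hbound
      (convex_Icc 0 1) (Set.left_mem_Icc.mpr zero_le_one)
      (Set.right_mem_Icc.mpr zero_le_one)
    have hφ1 : φ 1 = ⟪N u, θseq (t+1)⟫ := by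
      rw [hφdef]
      simp only [hγ1]
      rw [← hrec t]
    have hφ0 : φ 0 = ⟪N u, θhat⟫ := by
      rw [hφdef]
      simp only [hγ0, hroot, map_zero, smul_zero, add_zero]
    rw [hφ1, hφ0, ← inner_sub_right] at hMVT
    have huu : θseq (t+1) - θhat = u := hu.symm
    rw [huu] at hMVT
    have hMVT2 : (⟪u, N u⟫ : ℝ) ≤ ρ * Real.sqrt ⟪u, N u⟫ * Real.sqrt ⟪η, N η⟫ := by
      have h3 : ‖(1:ℝ) - 0‖ = 1 := by norm_num
      rw [h3, mul_one] at hMVT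
      have h1 : (⟪N u, u⟫ : ℝ) = ⟪u, N u⟫ := (hNsa u u).symm
      rw [h1, Real.norm_eq_abs] at hMVT
      exact le_trans (le_abs_self _) hMVT
    set x := Real.sqrt ⟪u, N u⟫ with hx
    set y := Real.sqrt ⟪η, N η⟫ with hy
    have hx2 : x ^ 2 = ⟪u, N u⟫ := Real.sq_sqrt (hNpos u)
    have hxpos : 0 ≤ x := Real.sqrt_nonneg _
    have hypos : 0 ≤ y := Real.sqrt_nonneg _
    rcases eq_or_lt_of_le hxpos with h | h
    · rw [← h]
      positivity
    · nlinarith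
  -- iterate
  have hiter : ∀ t : ℕ,
      Real.sqrt ⟪θseq t - θhat, N (θseq t - θhat)⟫ ≤
        ρ ^ t * Real.sqrt ⟪θseq 0 - θhat, N (θseq 0 - θhat)⟫ := by
    intro t
    induction t with
    | zero => simp
    | succ n ih =>
      calc Real.sqrt ⟪θseq (n+1) - θhat, N (θseq (n+1) - θhat)⟫
          ≤ ρ * Real.sqrt ⟪θseq n - θhat, N (θseq n - θhat)⟫ := hstep n
        _ ≤ ρ * (ρ ^ n * Real.sqrt ⟪θseq 0 - θhat, N (θseq 0 - θhat)⟫) :=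
            mul_le_mul_of_nonneg_left ih hρpos
        _ = ρ ^ (n+1) * Real.sqrt ⟪θseq 0 - θhat, N (θseq 0 - θhat)⟫ := by ring
  -- conclude
  intro t
  have h1 : ‖θseq t - θhat‖ ≤
      Real.sqrt hmax * Real.sqrt ⟪θseq t - θhat, N (θseq t - θhat)⟫ := by
    have h := hqu (θseq t - θhat)
    calc ‖θseq t - θhat‖ = Real.sqrt (‖θseq t - θhat‖ ^ 2) :=
          (Real.sqrt_sq (norm_nonneg _)).symm
      _ ≤ Real.sqrt (hmax * ⟪θseq t - θhat, N (θseq t - θhat)⟫) := Real.sqrt_le_sqrt h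
      _ = Real.sqrt hmax * Real.sqrt ⟪θseq t - θhat, N (θseq t - θhat)⟫ :=
          Real.sqrt_mul (by linarith) _
  have h2 : Real.sqrt ⟪θseq 0 - θhat, N (θseq 0 - θhat)⟫ ≤
      ‖θseq 0 - θhat‖ / Real.sqrt hmin := by
    rw [le_div_iff₀ (Real.sqrt_pos.mpr hhmin)]
    have h := hql (θseq 0 - θhat)
    calc Real.sqrt ⟪θseq 0 - θhat, N (θseq 0 - θhat)⟫ * Real.sqrt hmin
        = Real.sqrt (hmin * ⟪θseq 0 - θhat, N (θseq 0 - θhat)⟫) := by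
          rw [Real.sqrt_mul (by linarith), mul_comm]
      _ ≤ Real.sqrt (‖θseq 0 - θhat‖ ^ 2) := Real.sqrt_le_sqrt h
      _ = ‖θseq 0 - θhat‖ := Real.sqrt_sq (norm_nonneg _)
  have hsqrtdiv : Real.sqrt (hmax / hmin) = Real.sqrt hmax / Real.sqrt hmin :=
    Real.sqrt_div (by linarith) _
  have hsm : (0:ℝ) ≤ Real.sqrt hmax := Real.sqrt_nonneg _
  have hρt : (0:ℝ) ≤ ρ ^ t := pow_nonneg hρpos t
  calc ‖θseq t - θhat‖
      ≤ Real.sqrt hmax * Real.sqrt ⟪θseq t - θhat, N (θseq t - θhat)⟫ := h1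
    _ ≤ Real.sqrt hmax * (ρ ^ t * Real.sqrt ⟪θseq 0 - θhat, N (θseq 0 - θhat)⟫) :=
        mul_le_mul_of_nonneg_left (hiter t) hsm
    _ ≤ Real.sqrt hmax * (ρ ^ t * (‖θseq 0 - θhat‖ / Real.sqrt hmin)) := by
        refine mul_le_mul_of_nonneg_left ?_ hsm
        exact mul_le_mul_of_nonneg_left h2 hρt
    _ = Real.sqrt (hmax / hmin) * ρ ^ t * ‖θseq 0 - θhat‖ := by
        rw [hsqrtdiv]
        field_simp
end

section
/- Assume: (boundary condition) for ν-almost every x ∈ 𝒳, p(θ)·q(θ, x)·s(θ, x) → 0 as θ → +∞ and as θ → −∞; (finite moments) the functions (θ, x) ↦ s(θ, x)²·p(θ)·q(θ, x), (θ, x) ↦ (∂_θ log q(θ, x))²·p(θ)·q(θ, x), and (θ, x) ↦ |∂_θ(p(θ)·s(θ, x))|·q(θ, x) are integrable with respect to the product of Lebesgue measure on ℝ and ν. Then ∫_ℝ ∫_𝒳 (s(θ, x) − ∂_θ log q(θ, x))²·p(θ)·q(θ, x) ν(dx) dθ = ∫_ℝ ∫_𝒳 [s(θ, x)² + 2·s(θ,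 x)·∂_θ log p(θ) + 2·∂_θ s(θ, x)]·p(θ)·q(θ, x) ν(dx) dθ + ∫_ℝ ∫_𝒳 (∂_θ log q(θ, x))²·p(θ)·q(θ, x) ν(dx) dθ. -/
open MeasureTheory Filter Topology

set_option maxHeartbeats 1000000

/-- Joint measurability of a parametric derivative, via difference quotients. -/
theorem aux_meas_deriv {X : Type*} [MeasurableSpace X] {f f' : ℝ → X → ℝ}
    (hf : Measurable (Function.uncurry f))
    (h : ∀ x, ∀ θ : ℝ, HasDerivAt (fun t => f t x) (f' θ x) θ) :
    Measurable (Function.uncurry f') := by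
  have key : ∀ z : ℝ × X, Tendsto
      (fun n : ℕ => ((n : ℝ) + 1) * (f (z.1 + ((n : ℝ) + 1)⁻¹) z.2 - f z.1 z.2))
      atTop (𝓝 (f' z.1 z.2)) := by
    intro z
    have h1 := (h z.2 z.1).tendsto_slope_zero
    have h2 : Tendsto (fun n : ℕ => ((n : ℝ) + 1)⁻¹) atTop (𝓝[≠] (0 : ℝ)) := by
      apply tendsto_nhdsWithin_of_tendsto_nhds_of_eventually_within
      · simpa [one_div] using tendsto_one_div_add_atTop_nhds_zero_nat (𝕜 := ℝ)
      · filter_upwards with n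
        have : (0 : ℝ) < ((n : ℝ) + 1)⁻¹ := by positivity
        exact fun hn => absurd hn (by simpa using this.ne')
    simpa [Function.comp_def, smul_eq_mul, inv_inv] using h1.comp h2
  have hmeas : ∀ n : ℕ, Measurable
      (fun z : ℝ × X => ((n : ℝ) + 1) * (f (z.1 + ((n : ℝ) + 1)⁻¹) z.2 - f z.1 z.2)) := by
    intro n
    exact measurable_const.mul
      ((hf.comp ((measurable_fst.add_const _).prodMk measurable_snd)).sub hf)
  have : Measurable (fun z : ℝ × X => f' z.1 z.2) :=
    measurable_of_tendsto_metrizable hmeas (tendsto_pi_nhds.2 key)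
  exact this

/-- FTC on the whole real line: integral of the derivative is zero when the function
vanishes at both infinities. -/
theorem aux_integral_deriv_zero {F F' : ℝ → ℝ} (hF : ∀ θ, HasDerivAt F (F' θ) θ)
    (hint : Integrable F') (htop : Tendsto F atTop (𝓝 0)) (hbot : Tendsto F atBot (𝓝 0)) :
    ∫ θ : ℝ, F' θ = 0 := by
  have h1 : ∫ θ in Set.Iic (0:ℝ), F' θ = F 0 - 0 :=
    integral_Iic_of_hasDerivAt_of_tendsto' (fun x _ => hF x) hint.integrableOn hbot
  have h2 : ∫ θ in Set.Ioi (0:ℝ), F' θ = 0 - F 0 :=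
    integral_Ioi_of_hasDerivAt_of_tendsto' (fun x _ => hF x) hint.integrableOn htop
  have h3 := intervalIntegral.integral_Iic_add_Ioi (b := (0:ℝ)) hint.integrableOn hint.integrableOn
  rw [← h3, h1, h2]; ring

/-- score-matching objective equivalence, one-dimensional parameter.
Under the boundary condition `p(θ) q(θ,x) s(θ,x) → 0` as `θ → ±∞` (for `ν`-a.e. `x`) and the
finite-moment conditions, the intractable score-matching loss equals the tractable objective
plus a constant not depending on `s`:
`∫∫ (s - ∂_θ log q)² p q = ∫∫ (s² + 2 s ∂_θ log p + 2 ∂_θ s) p q + ∫∫ (∂_θ log q)² p q`. -/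
theorem stmt_16 {X : Type*} [MeasurableSpace X] (ν : Measure X) [SigmaFinite ν]
    (p p' : ℝ → ℝ) (q q' s s' : ℝ → X → ℝ)
    -- `p` is a continuously differentiable, everywhere positive probability density on ℝ
    (hp : ∀ θ : ℝ, HasDerivAt p (p' θ) θ)
    (hp'cont : Continuous p')
    (hppos : ∀ θ : ℝ, 0 < p θ)
    (hpint : ∫ θ : ℝ, p θ = 1)
    -- `q` is the model density: jointly measurable, positive, C¹ in `θ`, density in `x`
    (hqmeas : Measurable (Function.uncurry q))
    (hqpos : ∀ θ x, 0 < q θ x)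
    (hq : ∀ x, ∀ θ : ℝ, HasDerivAt (fun t => q t x) (q' θ x) θ)
    (hq'cont : ∀ x, Continuous (fun θ => q' θ x))
    (hqint : ∀ θ : ℝ, ∫ x, q θ x ∂ν = 1)
    -- the score model `s`: jointly measurable, C¹ in `θ`
    (hsmeas : Measurable (Function.uncurry s))
    (hs : ∀ x, ∀ θ : ℝ, HasDerivAt (fun t => s t x) (s' θ x) θ)
    (hs'cont : ∀ x, Continuous (fun θ => s' θ x))
    -- boundary condition
    (hbdry : ∀ᵐ x ∂ν,
      Tendsto (fun θ => p θ * q θ x * s θ x) atTop (𝓝 0) ∧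
      Tendsto (fun θ => p θ * q θ x * s θ x) atBot (𝓝 0))
    -- finite moments
    (hmom1 : Integrable (fun z : ℝ × X => s z.1 z.2 ^ 2 * p z.1 * q z.1 z.2)
      ((volume : Measure ℝ).prod ν))
    (hmom2 : Integrable (fun z : ℝ × X => (q' z.1 z.2 / q z.1 z.2) ^ 2 * p z.1 * q z.1 z.2)
      ((volume : Measure ℝ).prod ν))
    (hmom3 : Integrable (fun z : ℝ × X => |p' z.1 * s z.1 z.2 + p z.1 * s' z.1 z.2| * q z.1 z.2)
      ((volume : Measure ℝ).prod ν)) :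
    ∫ θ : ℝ, ∫ x, (s θ x - q' θ x / q θ x) ^ 2 * p θ * q θ x ∂ν =
      (∫ θ : ℝ, ∫ x, (s θ x ^ 2 + 2 * s θ x * (p' θ / p θ) + 2 * s' θ x) * p θ * q θ x ∂ν) +
      ∫ θ : ℝ, ∫ x, (q' θ x / q θ x) ^ 2 * p θ * q θ x ∂ν := by
  set μ := (volume : Measure ℝ).prod ν with hμ
  -- basic measurability facts
  have hpcont : Continuous p := by
    rw [continuous_iff_continuousAt]; exact fun θ => (hp θ).continuousAt
  have hq'meas : Measurable (Function.uncurry q') := aux_meas_deriv hqmeas hq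
  have hs'meas : Measurable (Function.uncurry s') := aux_meas_deriv hsmeas hs
  have hqm : Measurable (fun z : ℝ × X => q z.1 z.2) := hqmeas
  have hq'm : Measurable (fun z : ℝ × X => q' z.1 z.2) := hq'meas
  have hsm : Measurable (fun z : ℝ × X => s z.1 z.2) := hsmeas
  have hs'm : Measurable (fun z : ℝ × X => s' z.1 z.2) := hs'meas
  have hpm : Measurable (fun z : ℝ × X => p z.1) := hpcont.measurable.comp measurable_fst
  have hp'm : Measurable (fun z : ℝ × X => p' z.1) := hp'cont.measurable.comp measurable_fst
  -- the four building blocks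
  set A : ℝ × X → ℝ := fun z => s z.1 z.2 ^ 2 * p z.1 * q z.1 z.2 with hA
  set B : ℝ × X → ℝ := fun z => (q' z.1 z.2 / q z.1 z.2) ^ 2 * p z.1 * q z.1 z.2 with hB
  set C : ℝ × X → ℝ := fun z => p z.1 * q' z.1 z.2 * s z.1 z.2 with hC
  set D : ℝ × X → ℝ := fun z => (p' z.1 * s z.1 z.2 + p z.1 * s' z.1 z.2) * q z.1 z.2 with hD
  have hCmeas : Measurable C := (hpm.mul hq'm).mul hsm
  have hDmeas : Measurable D := ((hp'm.mul hsm).add (hpm.mul hs'm)).mul hqm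
  -- integrability of C
  have hCint : Integrable C μ := by
    refine (hmom1.add hmom2).mono' hCmeas.aestronglyMeasurable ?_
    filter_upwards with z
    have hq0 : (0:ℝ) < q z.1 z.2 := hqpos z.1 z.2
    have hp0 : (0:ℝ) < p z.1 := hppos z.1
    set a := s z.1 z.2
    set b := q' z.1 z.2 / q z.1 z.2 with hb
    have hCz : C z = a * b * (p z.1 * q z.1 z.2) := by
      simp only [hC, hb]; field_simp; ring
    have hab : |a * b| ≤ a ^ 2 + b ^ 2 := by
      nlinarith [sq_nonneg (|a| - |b|), sq_abs a, sq_abs b, abs_nonneg a, abs_nonneg b,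
        abs_mul a b, abs_nonneg (a*b)]
    have hpq : (0:ℝ) ≤ p z.1 * q z.1 z.2 := le_of_lt (mul_pos hp0 hq0)
    calc ‖C z‖ = |a * b| * (p z.1 * q z.1 z.2) := by
          rw [Real.norm_eq_abs, hCz, abs_mul, abs_of_nonneg hpq]
      _ ≤ (a ^ 2 + b ^ 2) * (p z.1 * q z.1 z.2) := mul_le_mul_of_nonneg_right hab hpq
      _ = s z.1 z.2 ^ 2 * p z.1 * q z.1 z.2
          + (q' z.1 z.2 / q z.1 z.2) ^ 2 * p z.1 * q z.1 z.2 := by ring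
  -- integrability of D
  have hDint : Integrable D μ := by
    refine hmom3.mono' hDmeas.aestronglyMeasurable ?_
    filter_upwards with z
    have hq0 : (0:ℝ) < q z.1 z.2 := hqpos z.1 z.2
    rw [Real.norm_eq_abs, hD, abs_mul, abs_of_pos hq0]
  -- key Fubini/integration-by-parts identity
  have hkey : ∫ z, (C z + D z) ∂μ = 0 := by
    rw [hμ, integral_prod_symm (fun z : ℝ × X => C z + D z) (hCint.add hDint)]
    apply integral_eq_zero_of_ae
    filter_upwards [hbdry, (hCint.add hDint).prod_left_ae] with x hbx hintx
    have hderiv : ∀ θ : ℝ, HasDerivAt (fun t => p t * q t x * s t x)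
        (C (θ, x) + D (θ, x)) θ := by
      intro θ
      have h1 : HasDerivAt (fun t => p t * q t x * s t x) _ θ := ((hp θ).mul (hq x θ)).mul (hs x θ)
      convert h1 using 1
      simp only [hC, hD, Pi.mul_apply]; ring
    exact aux_integral_deriv_zero hderiv hintx hbx.1 hbx.2
  have hkey' : (∫ z, C z ∂μ) + ∫ z, D z ∂μ = 0 := by
    rw [← integral_add hCint hDint]; exact hkey
  -- rewrite the three integrands
  have e1 : (fun z : ℝ × X => (s z.1 z.2 - q' z.1 z.2 / q z.1 z.2) ^ 2 * p z.1 * q z.1 z.2)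
      = fun z => A z - 2 * C z + B z := by
    funext z
    have hq0 : q z.1 z.2 ≠ 0 := (hqpos z.1 z.2).ne'
    simp only [hA, hB, hC]
    field_simp
    ring
  have e2 : (fun z : ℝ × X => (s z.1 z.2 ^ 2 + 2 * s z.1 z.2 * (p' z.1 / p z.1)
      + 2 * s' z.1 z.2) * p z.1 * q z.1 z.2) = fun z => A z + 2 * D z := by
    funext z
    have hp0 : p z.1 ≠ 0 := (hppos z.1).ne'
    simp only [hA, hD]
    field_simp
    ring
  have hIntL : Integrable
      (fun z : ℝ × X => (s z.1 z.2 - q' z.1 z.2 / q z.1 z.2) ^ 2 * p z.1 * q z.1 z.2) μ := by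
    rw [e1]; exact (hmom1.sub (hCint.const_mul 2)).add hmom2
  have hIntR : Integrable
      (fun z : ℝ × X => (s z.1 z.2 ^ 2 + 2 * s z.1 z.2 * (p' z.1 / p z.1)
        + 2 * s' z.1 z.2) * p z.1 * q z.1 z.2) μ := by
    rw [e2]; exact hmom1.add (hDint.const_mul 2)
  -- convert iterated integrals to product integrals
  have hL1 : (∫ θ : ℝ, ∫ x, (s θ x - q' θ x / q θ x) ^ 2 * p θ * q θ x ∂ν)
      = ∫ z, (A z - 2 * C z + B z) ∂μ := by
    rw [← e1]
    exact (integral_prod _ hIntL).symm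
  have hR1 : (∫ θ : ℝ, ∫ x, (s θ x ^ 2 + 2 * s θ x * (p' θ / p θ) + 2 * s' θ x)
        * p θ * q θ x ∂ν)
      = ∫ z, (A z + 2 * D z) ∂μ := by
    rw [← e2]
    exact (integral_prod _ hIntR).symm
  have hR2 : (∫ θ : ℝ, ∫ x, (q' θ x / q θ x) ^ 2 * p θ * q θ x ∂ν) = ∫ z, B z ∂μ :=
    (integral_prod _ hmom2).symm
  rw [hL1, hR1, hR2]
  have iC2 : Integrable (fun z : ℝ × X => 2 * C z) μ := hCint.const_mul 2
  have iD2 : Integrable (fun z : ℝ × X => 2 * D z) μ := hDint.const_mul 2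
  have iAC : Integrable (fun z : ℝ × X => A z - 2 * C z) μ := hmom1.sub iC2
  rw [integral_add iAC hmom2, integral_sub hmom1 iC2, integral_const_mul,
    integral_add hmom1 iD2, integral_const_mul]
  linarith [hkey']
end
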